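/- Let H be a complex Hilbert space and let σ : K(H) → K(H) be a conjugate-linear *-algebra automorphism, i.e., an additive bijection with σ(λ • T) = (starRingEnd ℂ λ) • σ(T), σ(T ∘ S) = σ(T) ∘ σ(S), and σ(T*) = σ(T)* for all compact operators T, S and λ ∈ ℂ. Then σ is implemented by an antiunitary: there exists an antiunitary J on H such that σ(T) = J ∘ T ∘ J⁻¹ for every compact operator T. -/

import Mathlib

open scoped ComplexInnerProductSpace

/-- The `*`-algebra `K(H)` of compact operators on `H`, realized as the subtype of
continuous linear maps `H →L[ℂ] H` that are compact operators. -/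
abbrev CompactOp (H : Type*) [NormedAddCommGroup H] [NormedSpace ℂ H] : Type _ :=
  {T : H →L[ℂ] H // IsCompactOperator T}

set_option linter.unusedSectionVars false

section helpers

variable {H : Type*} [NormedAddCommGroup H] [InnerProductSpace ℂ H] [CompleteSpace H]

/-- rank one operator `y ↦ ⟪e,y⟫ • x` -/
noncomputable def rk (x e : H) : H →L[ℂ] H := (innerSL ℂ e).smulRight x

@[simp] lemma rk_apply (x e y : H) : rk x e y = ⟪e, y⟫ • x := rfl

lemma rk_compact (x e : H) : IsCompactOperator (rk x e) := by
  rw [isCompactOperator_iff_exists_mem_nhds_image_subset_compact]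
  refine ⟨Metric.ball 0 1, Metric.ball_mem_nhds 0 one_pos,
    (fun c : ℂ => c • x) '' Metric.closedBall 0 ‖e‖,
    ((isCompact_closedBall 0 ‖e‖).image (by continuity)), ?_⟩
  rintro _ ⟨y, hy, rfl⟩
  refine ⟨⟪e, y⟫, ?_, rfl⟩
  rw [Metric.mem_ball, dist_zero_right] at hy
  rw [Metric.mem_closedBall, dist_zero_right]
  calc ‖⟪e, y⟫‖ ≤ ‖e‖ * ‖y‖ := norm_inner_le_norm e y
    _ ≤ ‖e‖ * 1 := by nlinarith [norm_nonneg e, hy.le]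
    _ = ‖e‖ := mul_one _

lemma rk_adjoint (x e : H) : ContinuousLinearMap.adjoint (rk x e) = rk e x := by
  symm
  rw [ContinuousLinearMap.eq_adjoint_iff]
  intro u v
  simp [inner_smul_left, inner_smul_right, inner_conj_symm, mul_comm]

lemma rk_comp_rk (x e y f : H) : (rk x e).comp (rk y f) = ⟪e, y⟫ • rk x f := by
  ext z; simp [smul_smul, mul_comm]

lemma comp_rk (T : H →L[ℂ] H) (x e : H) : T.comp (rk x e) = rk (T x) e := by
  ext z; simp

lemma rk_add (x y e : H) : rk (x + y) e = rk x e + rk y e := by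
  ext z; simp [smul_add]

lemma rk_smul (c : ℂ) (x e : H) : rk (c • x) e = c • rk x e := by
  ext z; simp [smul_smul, mul_comm]

end helpers

/-- Every conjugate-linear `*`-algebra automorphism `σ` of the algebra
`K(H)` of compact operators on a complex Hilbert space `H` is implemented by an
antiunitary: there is an antiunitary `J` (with inverse `Jinv`) such that
`σ T = J ∘ T ∘ J⁻¹` for every compact operator `T`. -/
theorem stmt_6 {H : Type*} [NormedAddCommGroup H] [InnerProductSpace ℂ H] [CompleteSpace H]
    (σ : CompactOp H → CompactOp H)
    (hbij : Function.Bijective σ)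
    (haddσ : ∀ (T S : CompactOp H) (h : IsCompactOperator (T.1 + S.1)),
      (σ ⟨T.1 + S.1, h⟩).1 = (σ T).1 + (σ S).1)
    (hsmulσ : ∀ (c : ℂ) (T : CompactOp H) (h : IsCompactOperator (c • T.1)),
      (σ ⟨c • T.1, h⟩).1 = (starRingEnd ℂ c) • (σ T).1)
    (hmulσ : ∀ (T S : CompactOp H) (h : IsCompactOperator (T.1.comp S.1)),
      (σ ⟨T.1.comp S.1, h⟩).1 = (σ T).1.comp (σ S).1)
    (hstarσ : ∀ (T : CompactOp H) (h : IsCompactOperator (ContinuousLinearMap.adjoint T.1)),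
      (σ ⟨ContinuousLinearMap.adjoint T.1, h⟩).1 = ContinuousLinearMap.adjoint (σ T).1) :
    ∃ J Jinv : H → H,
      Function.LeftInverse Jinv J ∧ Function.RightInverse Jinv J ∧
      (∀ x y : H, J (x + y) = J x + J y) ∧
      (∀ (c : ℂ) (x : H), J (c • x) = (starRingEnd ℂ c) • J x) ∧
      (∀ x y : H, ⟪J x, J y⟫ = ⟪y, x⟫) ∧
      (∀ (T : CompactOp H) (x : H), (σ T).1 x = J (T.1 (Jinv x))) := by
  rcases subsingleton_or_nontrivial H with hs | hn
  · exact ⟨id, id, fun x => rfl, fun x => rfl, fun x y => Subsingleton.elim _ _,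
      fun c x => Subsingleton.elim _ _, fun x y => by rw [Subsingleton.elim x y]; rfl,
      fun T x => Subsingleton.elim _ _⟩
  -- rewriting tool
  have congσ : ∀ (A B : H →L[ℂ] H) (hA : IsCompactOperator A) (hB : IsCompactOperator B),
      A = B → (σ ⟨A, hA⟩).1 = (σ ⟨B, hB⟩).1 := by
    intro A B hA hB h
    subst h; rfl
  -- a unit vector e
  obtain ⟨x0, hx0⟩ := exists_ne (0 : H)
  set e : H := ‖x0‖⁻¹ • x0 with he_def
  have he : ‖e‖ = 1 := norm_smul_inv_norm hx0
  have hee : ⟪e, e⟫ = 1 := by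
    rw [inner_self_eq_norm_sq_to_K, he]; norm_num
  have hene : e ≠ 0 := fun h => by simp [h] at he
  set p : CompactOp H := ⟨rk e e, rk_compact e e⟩ with hp_def
  set q : CompactOp H := σ p with hq_def
  -- σ of zero is zero
  set T0 : CompactOp H := ⟨0, isCompactOperator_zero⟩ with hT0_def
  have hσ0 : (σ T0).1 = 0 := by
    have h0 : IsCompactOperator (T0.1 + T0.1) := by
      simpa [hT0_def] using (isCompactOperator_zero : IsCompactOperator (0 : H →L[ℂ] H))
    have h1 := haddσ T0 T0 h0
    have h2 : (⟨T0.1 + T0.1, h0⟩ : CompactOp H) = T0 := Subtype.ext (by simp [hT0_def])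
    rw [h2] at h1
    exact left_eq_add.mp h1
  -- q is self-adjoint
  have hq_adj : ContinuousLinearMap.adjoint q.1 = q.1 := by
    have hc : IsCompactOperator (⇑(ContinuousLinearMap.adjoint (rk e e))) := by
      rw [rk_adjoint]; exact rk_compact e e
    have h1 := hstarσ p hc
    have h2 := congσ _ _ hc (rk_compact e e) (rk_adjoint e e)
    rw [h2] at h1
    exact h1.symm
  -- q is idempotent
  have hq_idem : q.1.comp q.1 = q.1 := by
    have hpp : (rk e e).comp (rk e e) = rk e e := by
      rw [rk_comp_rk, hee, one_smul]
    have hc : IsCompactOperator (⇑((rk e e).comp (rk e e))) := by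
      rw [hpp]; exact rk_compact e e
    have h1 := hmulσ p p hc
    have h2 := congσ _ _ hc (rk_compact e e) hpp
    rw [h2] at h1
    exact h1.symm
  -- q ≠ 0, get a unit vector f fixed by q
  have hqne : q.1 ≠ 0 := by
    intro h
    have hq0 : q = σ T0 := Subtype.ext (by rw [h, hσ0])
    have hp0 : p = T0 := hbij.1 hq0
    have h3 : rk e e e = (0 : H →L[ℂ] H) e := by
      exact congrArg (fun S : CompactOp H => S.1 e) hp0
    rw [rk_apply, hee, one_smul] at h3
    simp only [ContinuousLinearMap.zero_apply] at h3
    exact hene h3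
  obtain ⟨v, hv⟩ : ∃ v, q.1 v ≠ 0 := by
    by_contra h
    push_neg at h
    exact hqne (ContinuousLinearMap.ext h)
  set f : H := ‖q.1 v‖⁻¹ • q.1 v with hf_def
  have hqqv : q.1 (q.1 v) = q.1 v := by
    have := congrArg (fun S : H →L[ℂ] H => S v) hq_idem
    simpa using this
  have hqf : q.1 f = f := by
    have h := q.1.map_smul_of_tower (‖q.1 v‖⁻¹ : ℝ) (q.1 v)
    rw [hf_def, h, hqqv]
  have hfn : ‖f‖ = 1 := norm_smul_inv_norm hv
  have hff : ⟪f, f⟫ = 1 := by rw [inner_self_eq_norm_sq_to_K, hfn]; norm_num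
  have hfne : f ≠ 0 := fun h => by simp [h] at hfn
  -- key fact: q = rk f f
  have hq_rk : q.1 = rk f f := by
    obtain ⟨T, hT⟩ := hbij.2 ⟨rk f f, rk_compact f f⟩
    have hfq : (rk f f).comp q.1 = rk f f := by
      ext z
      simp only [ContinuousLinearMap.comp_apply, rk_apply]
      rw [← ContinuousLinearMap.adjoint_inner_left q.1 z f, hq_adj, hqf]
    have hc1 : IsCompactOperator (⇑(T.1.comp (rk e e))) := by
      rw [comp_rk]; exact rk_compact _ _
    have h1 := hmulσ T p hc1
    have h1' : (σ ⟨T.1.comp (rk e e), hc1⟩).1 = rk f f := by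
      rw [h1, hT]; exact hfq
    have hptp : (rk e e).comp (T.1.comp (rk e e)) = ⟪e, T.1 e⟫ • rk e e := by
      rw [comp_rk, rk_comp_rk]
    have hc2 : IsCompactOperator (⇑((rk e e).comp (T.1.comp (rk e e)))) := by
      rw [hptp, ← rk_smul]; exact rk_compact _ _
    have h2 := hmulσ p ⟨T.1.comp (rk e e), hc1⟩ hc2
    rw [h1'] at h2
    have hqff : q.1.comp (rk f f) = rk f f := by
      rw [comp_rk, hqf]
    rw [hqff] at h2
    have hc3 : IsCompactOperator (⇑((⟪e, T.1 e⟫ : ℂ) • rk e e)) := by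
      rw [← rk_smul]; exact rk_compact _ _
    have h3 := congσ _ _ hc2 hc3 hptp
    have h4 := hsmulσ ⟪e, T.1 e⟫ p hc3
    rw [h3, h4] at h2
    -- h2 : rk f f = conj ⟪e, T e⟫ • q.1
    have h5 : f = (starRingEnd ℂ ⟪e, T.1 e⟫) • f := by
      have := congrArg (fun S : H →L[ℂ] H => S f) h2.symm
      have hqf' : (σ p).1 f = f := hqf
      simpa [hff, hfn, hqf'] using this
    have h6 : (starRingEnd ℂ ⟪e, T.1 e⟫ - 1) • f = 0 := by
      rw [sub_smul, one_smul, sub_eq_zero]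
      exact h5.symm
    rcases smul_eq_zero.mp h6 with hc | hc
    · have hc' : starRingEnd ℂ ⟪e, T.1 e⟫ = 1 := by
        have := sub_eq_zero.mp hc; linear_combination this
      rw [hc', one_smul] at h2
      exact h2
    · exact absurd hc hfne
  -- the antiunitary
  set Jmap : H → H := fun x => (σ ⟨rk x e, rk_compact x e⟩).1 f with hJ_def
  have hJT : ∀ (T : CompactOp H) (z : H), (σ T).1 (Jmap z) = Jmap (T.1 z) := by
    intro T z
    have hc : IsCompactOperator (⇑(T.1.comp (rk z e))) := by
      rw [comp_rk]; exact rk_compact _ _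
    have h1 := hmulσ T ⟨rk z e, rk_compact z e⟩ hc
    have h2 := congσ _ _ hc (rk_compact (T.1 z) e) (comp_rk T.1 z e)
    calc (σ T).1 (Jmap z) = ((σ T).1.comp (σ ⟨rk z e, rk_compact z e⟩).1) f := rfl
      _ = (σ ⟨T.1.comp (rk z e), hc⟩).1 f := by rw [h1]
      _ = Jmap (T.1 z) := by rw [h2]
  have hJadd : ∀ x y : H, Jmap (x + y) = Jmap x + Jmap y := by
    intro x y
    have hc : IsCompactOperator (⇑(rk x e + rk y e)) := by
      rw [← rk_add]; exact rk_compact _ _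
    have h1 := haddσ ⟨rk x e, rk_compact x e⟩ ⟨rk y e, rk_compact y e⟩ hc
    have h2 := congσ _ _ (rk_compact (x + y) e) hc (rk_add x y e)
    show (σ ⟨rk (x + y) e, rk_compact (x + y) e⟩).1 f = _
    rw [h2, h1]
    rfl
  have hJsmul : ∀ (c : ℂ) (x : H), Jmap (c • x) = (starRingEnd ℂ c) • Jmap x := by
    intro c x
    have hc : IsCompactOperator (⇑(c • rk x e)) := by
      rw [← rk_smul]; exact rk_compact _ _
    have h1 := hsmulσ c ⟨rk x e, rk_compact x e⟩ hc
    have h2 := congσ _ _ (rk_compact (c • x) e) hc (rk_smul c x e)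
    show (σ ⟨rk (c • x) e, rk_compact (c • x) e⟩).1 f = _
    rw [h2, h1]
    rfl
  have hJinner : ∀ x y : H, ⟪Jmap x, Jmap y⟫ = ⟪y, x⟫ := by
    intro x y
    have hAadj : ContinuousLinearMap.adjoint (σ ⟨rk x e, rk_compact x e⟩).1
        = (σ ⟨rk e x, rk_compact e x⟩).1 := by
      have hc : IsCompactOperator (⇑(ContinuousLinearMap.adjoint (rk x e))) := by
        rw [rk_adjoint]; exact rk_compact _ _
      have h1 := hstarσ ⟨rk x e, rk_compact x e⟩ hc
      have h2 := congσ _ _ hc (rk_compact e x) (rk_adjoint x e)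
      rw [← h1, h2]
    have hcomp : (ContinuousLinearMap.adjoint (σ ⟨rk x e, rk_compact x e⟩).1).comp
        (σ ⟨rk y e, rk_compact y e⟩).1 = (starRingEnd ℂ ⟪x, y⟫) • q.1 := by
      rw [hAadj]
      have hc1 : IsCompactOperator (⇑((rk e x).comp (rk y e))) := by
        rw [rk_comp_rk, ← rk_smul]; exact rk_compact _ _
      have h1 := hmulσ ⟨rk e x, rk_compact e x⟩ ⟨rk y e, rk_compact y e⟩ hc1
      have hc2 : IsCompactOperator (⇑((⟪x, y⟫ : ℂ) • rk e e)) := by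
        rw [← rk_smul]; exact rk_compact _ _
      have h2 := congσ _ _ hc1 hc2 (rk_comp_rk e x y e)
      have h3 := hsmulσ ⟪x, y⟫ p hc2
      rw [← h1, h2, h3]
    calc ⟪Jmap x, Jmap y⟫
        = ⟪(σ ⟨rk x e, rk_compact x e⟩).1 f, (σ ⟨rk y e, rk_compact y e⟩).1 f⟫ := rfl
      _ = ⟪f, (ContinuousLinearMap.adjoint (σ ⟨rk x e, rk_compact x e⟩).1)
            ((σ ⟨rk y e, rk_compact y e⟩).1 f)⟫ :=
          (ContinuousLinearMap.adjoint_inner_right _ f _).symm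
      _ = ⟪f, ((ContinuousLinearMap.adjoint (σ ⟨rk x e, rk_compact x e⟩).1).comp
            (σ ⟨rk y e, rk_compact y e⟩).1) f⟫ := rfl
      _ = ⟪f, ((starRingEnd ℂ ⟪x, y⟫) • q.1) f⟫ := by rw [hcomp]
      _ = (starRingEnd ℂ ⟪x, y⟫) * ⟪f, q.1 f⟫ := by
          simp [inner_smul_right]
      _ = ⟪y, x⟫ := by rw [hqf, hff, mul_one, inner_conj_symm]
  -- J is bijective
  have hJzero : ∀ z : H, Jmap z = 0 → z = 0 := by
    intro z hz
    have h := hJinner z z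
    rw [hz] at h
    simp only [inner_zero_left] at h
    exact inner_self_eq_zero.mp h.symm
  have hJsub : ∀ a b : H, Jmap (a - b) = Jmap a - Jmap b := by
    intro a b
    calc Jmap (a - b) = Jmap (a + (-1 : ℂ) • b) := by rw [neg_one_smul, ← sub_eq_add_neg]
      _ = Jmap a + (starRingEnd ℂ (-1)) • Jmap b := by rw [hJadd, hJsmul]
      _ = Jmap a - Jmap b := by simp [sub_eq_add_neg]
  have hJinj : Function.Injective Jmap := by
    intro a b h
    have : a - b = 0 := hJzero _ (by rw [hJsub, h, sub_self])
    exact sub_eq_zero.mp this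
  have hJsurj : Function.Surjective Jmap := by
    intro y
    obtain ⟨T, hT⟩ := hbij.2 ⟨rk y f, rk_compact y f⟩
    refine ⟨T.1 e, ?_⟩
    have hc : IsCompactOperator (⇑(T.1.comp (rk e e))) := by
      rw [comp_rk]; exact rk_compact _ _
    have h1 := hmulσ T p hc
    have h2 := congσ (rk (T.1 e) e) (T.1.comp (rk e e)) (rk_compact (T.1 e) e) hc
      (comp_rk T.1 e e).symm
    show (σ ⟨rk (T.1 e) e, rk_compact (T.1 e) e⟩).1 f = y
    rw [h2, h1, hT]
    show (rk y f) (q.1 f) = y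
    rw [hqf, rk_apply, hff, one_smul]
  set Jeq : H ≃ H := Equiv.ofBijective Jmap ⟨hJinj, hJsurj⟩ with hJeq_def
  refine ⟨Jmap, Jeq.symm, Jeq.left_inv, Jeq.right_inv, hJadd, hJsmul, hJinner, ?_⟩
  intro T x
  have hx : Jmap (Jeq.symm x) = x := Jeq.right_inv x
  calc (σ T).1 x = (σ T).1 (Jmap (Jeq.symm x)) := by rw [hx]
    _ = Jmap (T.1 (Jeq.symm x)) := hJT T _
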